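/- Let $r, k, a, n$ be positive integers with $r > k \ge 1$, $a \ge 2$ and $n \ge ra$. Then $g(n,r,k,a) \ge (a-1)\binom{n-(a-1)k}{r-k}$, where $g(n,r,k,a) = \sum_{j=1}^{\min\{a-1, \lfloor r/k \rfloor\}} (-1)^{j-1}\binom{a-1}{j}\binom{n-jk}{r-jk}$. -/

import Mathlib

open Polynomial Finset

/-- Polynomials with nonnegative coefficients. -/
private def PolyNN (p : Polynomial ℤ) : Prop := ∀ m, 0 ≤ p.coeff m

private lemma PolyNN.mul {p q : Polynomial ℤ} (hp : PolyNN p) (hq : PolyNN q) :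
    PolyNN (p * q) := by
  intro m
  rw [Polynomial.coeff_mul]
  exact Finset.sum_nonneg fun i _ => mul_nonneg (hp _) (hq _)

private lemma PolyNN.pow {p : Polynomial ℤ} (hp : PolyNN p) (i : ℕ) : PolyNN (p ^ i) := by
  induction i with
  | zero => intro m; rw [pow_zero, Polynomial.coeff_one]; split <;> norm_num
  | succ i ih => rw [pow_succ]; exact ih.mul hp

private lemma PolyNN.X_add_one_pow (m : ℕ) : PolyNN ((X + 1 : Polynomial ℤ) ^ m) := by
  intro t; rw [Polynomial.coeff_X_add_one_pow]; positivity

private lemma PolyNN.X_pow (m : ℕ) : PolyNN ((X : Polynomial ℤ) ^ m) := by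
  intro t; rw [Polynomial.coeff_X_pow]; split <;> norm_num

/-- single term lower bound for a coefficient of a product of nonneg polys. -/
private lemma coeff_mul_single_le {p q : Polynomial ℤ} (hp : PolyNN p) (hq : PolyNN q)
    (u v : ℕ) : p.coeff u * q.coeff v ≤ (p * q).coeff (u + v) := by
  rw [Polynomial.coeff_mul]
  have hm : (u, v) ∈ Finset.HasAntidiagonal.antidiagonal (u + v) := Finset.HasAntidiagonal.mem_antidiagonal.2 rfl
  exact Finset.single_le_sum (f := fun x : ℕ × ℕ => p.coeff x.1 * q.coeff x.2)
    (fun i _ => mul_nonneg (hp _) (hq _)) hm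

/-- `g(n,r,k,a) ≥ (a-1)·C(n-(a-1)k, r-k)` for `r > k ≥ 1`, `a ≥ 2`, `n ≥ ra`. -/
theorem stmt_8 (n r k a : ℕ) (hk : 1 ≤ k) (hkr : k < r) (ha : 2 ≤ a) (hn : r * a ≤ n) :
    ((a - 1 : ℕ) : ℤ) * ((n - (a - 1) * k).choose (r - k)) ≤
      ∑ j ∈ Finset.Icc 1 (min (a - 1) (r / k)),
        (-1 : ℤ) ^ (j - 1) * ((a - 1).choose j) * ((n - j * k).choose (r - j * k)) := by
  set b := a - 1 with hb
  have hb1 : 1 ≤ b := by omega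
  have hbkn : b * k ≤ n := by
    calc b * k ≤ b * r := Nat.mul_le_mul_left _ hkr.le
      _ ≤ a * r := Nat.mul_le_mul_right _ (by omega)
      _ = r * a := Nat.mul_comm _ _
      _ ≤ n := hn
  have hkle : k ≤ r := hkr.le
  set A : Polynomial ℤ := (X + 1) ^ k with hA
  set Q : Polynomial ℤ := A - X ^ k with hQ
  have hANN : PolyNN A := PolyNN.X_add_one_pow k
  have hQNN : PolyNN Q := by
    intro m
    rw [hQ, Polynomial.coeff_sub, hA, Polynomial.coeff_X_add_one_pow, Polynomial.coeff_X_pow]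
    rcases eq_or_ne m k with rfl | hmk
    · simp
    · simp only [if_neg hmk, sub_zero]
      positivity
  -- the summand of the goal
  set f : ℕ → ℤ := fun j =>
    (-1 : ℤ) ^ (j - 1) * (b.choose j : ℤ) * (((n - j * k).choose (r - j * k) : ℕ) : ℤ) with hf
  -- binomial expansion of `Q ^ b`
  have hQpow : Q ^ b = ∑ j ∈ Finset.range (b + 1),
      (-1 : Polynomial ℤ) ^ j * ((b.choose j : ℕ) : Polynomial ℤ) *
        (A ^ (b - j) * X ^ (k * j)) := by
    rw [hQ, sub_pow, ← Finset.sum_range_reflect]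
    refine Finset.sum_congr rfl fun j hj => ?_
    rw [Finset.mem_range] at hj
    have hjb : j ≤ b := by omega
    have h1 : b + 1 - 1 - j = b - j := by omega
    have h2 : b - (b - j) = j := by omega
    have h3 : ((-1 : Polynomial ℤ)) ^ (b - j + b) = (-1) ^ j := by
      rw [show b - j + b = j + 2 * (b - j) by omega, pow_add, pow_mul]
      simp
    rw [h1, h2, h3, Nat.choose_symm hjb, ← pow_mul]
    ring
  have hexp : ∀ j ≤ b, (n - b * k) + k * (b - j) = n - j * k := by
    intro j hj
    have e1 : k * (b - j) = k * b - k * j := Nat.mul_sub k b j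
    have e2 : k * b = b * k := Nat.mul_comm _ _
    have e3 : k * j = j * k := Nat.mul_comm _ _
    have e4 : j * k ≤ b * k := Nat.mul_le_mul_right _ hj
    omega
  -- coefficient of `(X+1)^(n-bk) * Q^b` at `r`
  have hP : ((X + 1 : Polynomial ℤ) ^ (n - b * k) * Q ^ b).coeff r
      = ∑ j ∈ Finset.range (b + 1), (-1 : ℤ) ^ j * (b.choose j : ℤ) *
          (if k * j ≤ r then (((n - j * k).choose (r - k * j) : ℕ) : ℤ) else 0) := by
    rw [hQpow, Finset.mul_sum, Polynomial.finset_sum_coeff]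
    refine Finset.sum_congr rfl fun j hj => ?_
    rw [Finset.mem_range] at hj
    have hjb : j ≤ b := by omega
    have key : (X + 1 : Polynomial ℤ) ^ (n - b * k) *
        ((-1 : Polynomial ℤ) ^ j * ((b.choose j : ℕ) : Polynomial ℤ) *
          (A ^ (b - j) * X ^ (k * j)))
        = Polynomial.C ((-1 : ℤ) ^ j * (b.choose j : ℤ)) *
          ((X + 1) ^ (n - j * k) * X ^ (k * j)) := by
      have e : ((X + 1 : Polynomial ℤ)) ^ (n - j * k)
          = (X + 1) ^ (n - b * k) * A ^ (b - j) := by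
        rw [hA, ← pow_mul, ← pow_add, hexp j hjb]
      have hc : Polynomial.C ((-1 : ℤ) ^ j * (b.choose j : ℤ))
          = (-1 : Polynomial ℤ) ^ j * ((b.choose j : ℕ) : Polynomial ℤ) := by
        simp [map_mul, map_pow]
      rw [e, hc]
      ring
    rw [key, Polynomial.coeff_C_mul, Polynomial.coeff_mul_X_pow']
    split <;> simp [Polynomial.coeff_X_add_one_pow, mul_assoc]
  -- the goal sum as a filtered sum
  have hgoal_sum : ∑ j ∈ Finset.Icc 1 (min b (r / k)), f j
      = ∑ j ∈ Finset.Icc 1 b, (if k * j ≤ r then f j else 0) := by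
    rw [show Finset.Icc 1 (min b (r / k)) =
        (Finset.Icc 1 b).filter (fun j => k * j ≤ r) by
      ext j
      simp only [Finset.mem_Icc, Finset.mem_filter, le_min_iff,
        Nat.le_div_iff_mul_le hk, Nat.mul_comm j k]
      tauto]
    rw [Finset.sum_filter]
  -- relate the coefficient to the goal sum
  have hsplit : ((X + 1 : Polynomial ℤ) ^ (n - b * k) * Q ^ b).coeff r
      = (n.choose r : ℤ) - ∑ j ∈ Finset.Icc 1 b, (if k * j ≤ r then f j else 0) := by
    rw [hP, Finset.sum_range_succ']
    have h0 : ((-1 : ℤ) ^ 0 * (b.choose 0 : ℤ) *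
        (if k * 0 ≤ r then (((n - 0 * k).choose (r - k * 0) : ℕ) : ℤ) else 0))
        = (n.choose r : ℤ) := by simp
    rw [h0]
    have hIcc : ∑ j ∈ Finset.Icc 1 b, (if k * j ≤ r then f j else 0)
        = ∑ i ∈ Finset.range b, (if k * (i + 1) ≤ r then f (i + 1) else 0) := by
      rw [show Finset.Icc 1 b = Finset.Ico 1 (b + 1) by rfl, Finset.sum_Ico_eq_sum_range]
      simp only [Nat.add_sub_cancel]
      exact Finset.sum_congr rfl fun i _ => by rw [Nat.add_comm 1 i]
    rw [hIcc]
    have hterm : ∀ i ∈ Finset.range b, ((-1 : ℤ) ^ (i + 1) * (b.choose (i + 1) : ℤ) *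
        (if k * (i + 1) ≤ r then (((n - (i + 1) * k).choose (r - k * (i + 1)) : ℕ) : ℤ) else 0))
        = - (if k * (i + 1) ≤ r then f (i + 1) else 0) := by
      intro i _
      rw [hf]
      simp only [Nat.add_sub_cancel]
      rw [Nat.mul_comm k (i + 1)]
      split
      · rw [pow_succ]
        ring
      · ring
    rw [Finset.sum_congr rfl hterm, Finset.sum_neg_distrib]
    ring
  -- the geometric factorization
  have hgeom : A ^ b - Q ^ b = (∑ i ∈ Finset.range b, A ^ i * Q ^ (b - 1 - i)) * X ^ k := by
    have h := geom_sum₂_mul A Q b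
    rw [show A - Q = X ^ k by rw [hQ]; ring] at h
    exact h.symm
  have hXn : ((X + 1 : Polynomial ℤ) ^ n) = (X + 1) ^ (n - b * k) * A ^ b := by
    rw [hA, ← pow_mul, ← pow_add]
    congr 1
    have : k * b = b * k := Nat.mul_comm _ _
    omega
  -- the goal sum equals a coefficient of a nonneg polynomial
  have hmain : ∑ j ∈ Finset.Icc 1 (min b (r / k)), f j
      = ∑ i ∈ Finset.range b,
          ((X + 1 : Polynomial ℤ) ^ (n - b * k) * (A ^ i * Q ^ (b - 1 - i) * X ^ k)).coeff r := by
    rw [hgoal_sum]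
    have e1 : ∑ j ∈ Finset.Icc 1 b, (if k * j ≤ r then f j else 0)
        = (n.choose r : ℤ) - ((X + 1 : Polynomial ℤ) ^ (n - b * k) * Q ^ b).coeff r := by
      rw [hsplit]; ring
    rw [e1]
    have e2 : (n.choose r : ℤ) = ((X + 1 : Polynomial ℤ) ^ (n - b * k) * A ^ b).coeff r := by
      rw [← hXn, Polynomial.coeff_X_add_one_pow]
    rw [e2, ← Polynomial.coeff_sub, ← mul_sub, hgeom]
    rw [show (X + 1 : Polynomial ℤ) ^ (n - b * k) *
        ((∑ i ∈ Finset.range b, A ^ i * Q ^ (b - 1 - i)) * X ^ k)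
        = ∑ i ∈ Finset.range b,
            (X + 1 : Polynomial ℤ) ^ (n - b * k) * (A ^ i * Q ^ (b - 1 - i) * X ^ k) by
      rw [Finset.sum_mul, Finset.mul_sum]]
    rw [Polynomial.finset_sum_coeff]
  -- lower bound each term
  have hterm_ge : ∀ i ∈ Finset.range b, (((n - b * k).choose (r - k) : ℕ) : ℤ)
      ≤ ((X + 1 : Polynomial ℤ) ^ (n - b * k) * (A ^ i * Q ^ (b - 1 - i) * X ^ k)).coeff r := by
    intro i _
    have hq : PolyNN (A ^ i * Q ^ (b - 1 - i) * X ^ k) :=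
      ((hANN.pow i).mul (hQNN.pow _)).mul (PolyNN.X_pow k)
    have h := coeff_mul_single_le (PolyNN.X_add_one_pow (n - b * k)) hq (r - k) k
    rw [Nat.sub_add_cancel hkle] at h
    have hpcoeff : ((X + 1 : Polynomial ℤ) ^ (n - b * k)).coeff (r - k)
        = (((n - b * k).choose (r - k) : ℕ) : ℤ) := Polynomial.coeff_X_add_one_pow ℤ _ _
    have hqcoeff : (A ^ i * Q ^ (b - 1 - i) * X ^ k).coeff k = 1 := by
      rw [Polynomial.coeff_mul_X_pow']
      simp only [le_refl, if_true, Nat.sub_self]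
      rw [Polynomial.coeff_zero_eq_eval_zero]
      rw [hQ, hA]
      simp [zero_pow (show k ≠ 0 by omega)]
    rw [hpcoeff, hqcoeff, mul_one] at h
    exact h
  calc ((b : ℕ) : ℤ) * (((n - b * k).choose (r - k) : ℕ) : ℤ)
      = ∑ _i ∈ Finset.range b, (((n - b * k).choose (r - k) : ℕ) : ℤ) := by
        rw [Finset.sum_const, Finset.card_range, nsmul_eq_mul]
    _ ≤ ∑ i ∈ Finset.range b,
          ((X + 1 : Polynomial ℤ) ^ (n - b * k) * (A ^ i * Q ^ (b - 1 - i) * X ^ k)).coeff r :=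
        Finset.sum_le_sum (g := fun i =>
          ((X + 1 : Polynomial ℤ) ^ (n - b * k) * (A ^ i * Q ^ (b - 1 - i) * X ^ k)).coeff r)
          hterm_ge
    _ = ∑ j ∈ Finset.Icc 1 (min b (r / k)), f j := hmain.symm
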